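/- Cross law (red): for a triangle A1A2A3 with red quadrances Q1, Q2, Q3 and red spread s3 at A3 (defined when Q1, Q2 ≠ 0): (Q1+Q2−Q3)² = 4Q1Q2(1−s3). -/

import Mathlib

/-- Red quadrance between two points. -/
def Qr {F : Type*} [Field F] (X Y : F × F) : F :=
  (Y.1 - X.1) ^ 2 - (Y.2 - X.2) ^ 2

/-- Red spread between lines with direction vectors `u` and `v`. -/
def redSpread {F : Type*} [Field F] (u v : F × F) : F :=
  -((u.1 * v.2 - u.2 * v.1) ^ 2 / ((u.1 ^ 2 - u.2 ^ 2) * (v.1 ^ 2 - v.2 ^ 2)))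

/-- Cross law (red): `(Q1+Q2-Q3)² = 4Q1Q2(1-s3)`. -/
theorem red_cross_law {F : Type*} [Field F] (A1 A2 A3 : F × F)
    (hQ1 : Qr A2 A3 ≠ 0) (hQ2 : Qr A1 A3 ≠ 0) :
    (Qr A2 A3 + Qr A1 A3 - Qr A1 A2) ^ 2
      = 4 * Qr A2 A3 * Qr A1 A3
          * (1 - redSpread (A1.1 - A3.1, A1.2 - A3.2) (A2.1 - A3.1, A2.2 - A3.2)) := by
  simp only [Qr, redSpread] at *
  have h : ((A1.1 - A3.1) ^ 2 - (A1.2 - A3.2) ^ 2) * ((A2.1 - A3.1) ^ 2 - (A2.2 - A3.2) ^ 2) ≠ 0 := by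
    apply mul_ne_zero
    · intro h; apply hQ2; rw [← h]; ring
    · intro h; apply hQ1; rw [← h]; ring
  field_simp
  rw [sub_neg_eq_add, one_add_div h, ← mul_div_assoc, eq_div_iff h]
  ring
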